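/- Let φ_1, …, φ_n ∈ ℝ^d, let λ_1, …, λ_n ≥ 0 with Σ_i λ_i = 1, let ξ > 0, and set A = ξ·I_d + Σ_{i=1}^n λ_i·φ_iφ_iᵀ. Let θ ∈ ℝ^d and let y ∈ ℝ^d with y ≠ 0. Define θ' = θ − (2·(yᵀθ)/(yᵀA⁻¹y))·A⁻¹y. Then: (i) yᵀθ' = −(yᵀθ); and (ii) (1/2)·Σ_{i=1}^n λ_i·(φ_iᵀ(θ − θ'))² ≤ 2·(yᵀθ)² / (yᵀA⁻¹y). -/

import Mathlib

open Matrix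

lemma vecMulVec_mulVec' {d : ℕ} (u v x : Fin d → ℝ) :
    vecMulVec u v *ᵥ x = (v ⬝ᵥ x) • u := by
  ext i
  simp [vecMulVec, mulVec, dotProduct, Finset.mul_sum, mul_comm, mul_assoc, mul_left_comm]

lemma sum_mulVec' {d n : ℕ} (M : Fin n → Matrix (Fin d) (Fin d) ℝ)
    (x : Fin d → ℝ) : (∑ i, M i) *ᵥ x = ∑ i, M i *ᵥ x := by
  ext j
  simp only [mulVec, dotProduct, Finset.sum_apply, Matrix.sum_apply,
    Finset.sum_mul]
  exact Finset.sum_comm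

lemma dotProduct_sum' {d n : ℕ} (x : Fin d → ℝ) (f : Fin n → Fin d → ℝ) :
    x ⬝ᵥ ∑ i, f i = ∑ i, x ⬝ᵥ f i := by
  simp only [dotProduct, Finset.sum_apply, Finset.mul_sum]
  exact Finset.sum_comm

lemma quadA {d n : ℕ} (φ : Fin n → Fin d → ℝ) (lam : Fin n → ℝ) (ξ : ℝ)
    (x : Fin d → ℝ) :
    x ⬝ᵥ ((ξ • (1 : Matrix (Fin d) (Fin d) ℝ) +
      ∑ i, lam i • vecMulVec (φ i) (φ i)) *ᵥ x)
    = ξ * (x ⬝ᵥ x) + ∑ i, lam i * (φ i ⬝ᵥ x) ^ 2 := by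
  rw [add_mulVec, dotProduct_add, smul_mulVec, one_mulVec,
    dotProduct_smul, sum_mulVec', dotProduct_sum']
  congr 1
  refine Finset.sum_congr rfl fun i _ => ?_
  rw [smul_mulVec, vecMulVec_mulVec', dotProduct_smul, dotProduct_smul,
    smul_eq_mul, smul_eq_mul, sq, dotProduct_comm x]

/-- Counter-instance construction and KL computation: with
`A = ξI_d + Σᵢ λᵢ φᵢφᵢᵀ` (`λ` a probability vector), `y ≠ 0`, and
`θ' = θ − (2(yᵀθ)/(yᵀA⁻¹y))·A⁻¹y`, one has (i) `yᵀθ' = −yᵀθ`, and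
(ii) `(1/2)·Σᵢ λᵢ(φᵢᵀ(θ − θ'))² ≤ 2(yᵀθ)²/(yᵀA⁻¹y)`. -/
theorem counter_instance_kl_bound {d n : ℕ}
    (φ : Fin n → Fin d → ℝ) (lam : Fin n → ℝ)
    (hlam : ∀ i, 0 ≤ lam i) (hsum : ∑ i, lam i = 1)
    (ξ : ℝ) (hξ : 0 < ξ)
    (A : Matrix (Fin d) (Fin d) ℝ)
    (hA : A = ξ • (1 : Matrix (Fin d) (Fin d) ℝ) +
      ∑ i, lam i • vecMulVec (φ i) (φ i))
    (θ y : Fin d → ℝ) (hy : y ≠ 0)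
    (θ' : Fin d → ℝ)
    (hθ' : θ' = θ - (2 * (y ⬝ᵥ θ) / (y ⬝ᵥ (A⁻¹ *ᵥ y))) • (A⁻¹ *ᵥ y)) :
    y ⬝ᵥ θ' = -(y ⬝ᵥ θ) ∧
    (1 / 2) * ∑ i, lam i * (φ i ⬝ᵥ (θ - θ')) ^ 2 ≤
      2 * (y ⬝ᵥ θ) ^ 2 / (y ⬝ᵥ (A⁻¹ *ᵥ y)) := by
  have hdotself : ∀ x : Fin d → ℝ, x ≠ 0 → 0 < x ⬝ᵥ x := by
    intro x hx
    have h1 : 0 ≤ x ⬝ᵥ x := Finset.sum_nonneg fun i _ => mul_self_nonneg _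
    rcases h1.lt_or_eq with h | h
    · exact h
    · exfalso; apply hx; ext i
      have := Finset.sum_eq_zero_iff_of_nonneg
        (fun i (_ : i ∈ Finset.univ) => mul_self_nonneg (x i)) |>.mp h.symm
      have := this i (Finset.mem_univ i)
      simpa [mul_self_eq_zero] using this
  have hApd : A.PosDef := by
    refine Matrix.PosDef.of_dotProduct_mulVec_pos ?_ ?_
    · rw [hA]
      ext i j
      simp [Matrix.conjTranspose_apply, Matrix.add_apply, Matrix.sum_apply,
        vecMulVec_apply, Matrix.one_apply, mul_comm, eq_comm]
    · intro x hx
      have hsx : star x = x := rfl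
      rw [hsx, hA, quadA]
      have h1 : 0 < ξ * (x ⬝ᵥ x) := mul_pos hξ (hdotself x hx)
      have h2 : 0 ≤ ∑ i, lam i * (φ i ⬝ᵥ x) ^ 2 :=
        Finset.sum_nonneg fun i _ => mul_nonneg (hlam i) (sq_nonneg _)
      linarith
  have hAinv : (A⁻¹).PosDef := hApd.inv
  set q := y ⬝ᵥ (A⁻¹ *ᵥ y) with hqdef
  have hq : 0 < q := by
    have := hAinv.dotProduct_mulVec_pos hy
    simpa using this
  set t := y ⬝ᵥ θ with htdef
  set c := 2 * t / q with hcdef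
  have hz : θ - θ' = c • (A⁻¹ *ᵥ y) := by rw [hθ']; abel
  constructor
  · rw [hθ', dotProduct_sub, dotProduct_smul, smul_eq_mul, ← htdef, ← hqdef]
    rw [hcdef]
    field_simp
    ring
  · have hinst := hApd.isUnit.invertible
    have hAAinv : A *ᵥ (A⁻¹ *ᵥ y) = y := by
      rw [mulVec_mulVec, Matrix.mul_inv_of_invertible, one_mulVec]
    have hquad : (θ - θ') ⬝ᵥ (A *ᵥ (θ - θ')) = c ^ 2 * q := by
      rw [hz, mulVec_smul, hAAinv, dotProduct_smul, smul_dotProduct,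
        smul_eq_mul, smul_eq_mul, dotProduct_comm, ← hqdef, sq]
      ring
    have hsumle : ∑ i, lam i * (φ i ⬝ᵥ (θ - θ')) ^ 2 ≤ c ^ 2 * q := by
      have hq2 := quadA φ lam ξ (θ - θ')
      rw [← hA] at hq2
      have h3 : 0 ≤ ξ * ((θ - θ') ⬝ᵥ (θ - θ')) :=
        mul_nonneg hξ.le (Finset.sum_nonneg fun i _ => mul_self_nonneg _)
      nlinarith [hquad]
    have : (1 / 2 : ℝ) * (c ^ 2 * q) = 2 * t ^ 2 / q := by
      rw [hcdef]; field_simp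
    calc (1 / 2 : ℝ) * ∑ i, lam i * (φ i ⬝ᵥ (θ - θ')) ^ 2
        ≤ (1 / 2) * (c ^ 2 * q) := by linarith
      _ = 2 * t ^ 2 / q := this
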